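/- For every λ ≥ 0, the function f(x) = 1/(λ + x) on (0,∞) satisfies the harmonic-mean–arithmetic-mean inequality of operator log-convexity: for positive definite matrices X and Y, f((X+Y)/2) ≤ f(X) ! f(Y), where A ! B = ((A⁻¹+B⁻¹)/2)⁻¹ and f is applied by functional calculus. -/

import Mathlib

open Matrix ComplexOrder

/-- For `f(x) = 1/(λ+x)` with `λ ≥ 0`, `f((X+Y)/2) ≤ f(X) ! f(Y)`
(the harmonic mean) in the Loewner order, for positive definite `X, Y`. -/
theorem resolvent_harmonic_arith {n : ℕ} (l : ℝ) (hl : 0 ≤ l)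
    (X Y : Matrix (Fin n) (Fin n) ℂ) (hX : X.PosDef) (hY : Y.PosDef) :
    (((2 : ℂ)⁻¹ • ((((l : ℂ) • 1 + X)⁻¹)⁻¹ + (((l : ℂ) • 1 + Y)⁻¹)⁻¹))⁻¹ -
      ((l : ℂ) • 1 + (2 : ℂ)⁻¹ • (X + Y))⁻¹).PosSemidef := by
  have hl1 : ((l : ℂ) • (1 : Matrix (Fin n) (Fin n) ℂ)).PosSemidef := by
    refine Matrix.posSemidef_iff_dotProduct_mulVec.mpr ⟨?_, fun x => ?_⟩
    · simp [Matrix.IsHermitian, Matrix.conjTranspose_smul]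
    · rw [smul_mulVec, dotProduct_smul, smul_eq_mul, one_mulVec]
      exact mul_nonneg (by exact_mod_cast hl) (dotProduct_star_self_nonneg x)
  have hX' : ((l : ℂ) • 1 + X).PosDef := Matrix.PosDef.posSemidef_add hl1 hX
  have hY' : ((l : ℂ) • 1 + Y).PosDef := Matrix.PosDef.posSemidef_add hl1 hY
  rw [Matrix.nonsing_inv_nonsing_inv _ hX'.det_pos.ne'.isUnit,
    Matrix.nonsing_inv_nonsing_inv _ hY'.det_pos.ne'.isUnit]
  have : (2 : ℂ)⁻¹ • ((l : ℂ) • 1 + X + ((l : ℂ) • 1 + Y)) =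
      (l : ℂ) • 1 + (2 : ℂ)⁻¹ • (X + Y) := by
    match_scalars <;> ring
  rw [this, sub_self]
  exact Matrix.PosSemidef.zero
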